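/- Let (Y_n) be a Galton-Watson process with reproduction law ν. Suppose there exist integers N ≥ 1 and a ≥ 1 such that a · P^N(Y_1 ≥ a·N) > 1. Then P^1(τ = ∞) > 0. -/

import Mathlib

open MeasureTheory ProbabilityTheory Filter ENNReal
noncomputable section

set_option linter.unusedSectionVars false
set_option maxHeartbeats 1000000



section GWaux

variable {Ω : Type} [MeasurableSpace Ω]

/-- The truncated Galton-Watson process: offspring `min (X n i) B`, started from 1. -/
def truncGW (X : ℕ → ℕ → Ω → ℕ) (B : ℕ) : ℕ → Ω → ℕ
  | 0 => fun _ => 1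
  | n+1 => fun ω => ∑ i ∈ Finset.range (truncGW X B n ω), min (X n i ω) B

variable {X : ℕ → ℕ → Ω → ℕ} {B : ℕ}

lemma truncGW_le_pow (X : ℕ → ℕ → Ω → ℕ) (B : ℕ) : ∀ n ω, truncGW X B n ω ≤ B ^ n
  | 0, ω => le_refl 1
  | n+1, ω => by
    calc ∑ i ∈ Finset.range (truncGW X B n ω), min (X n i ω) B
        ≤ ∑ _i ∈ Finset.range (truncGW X B n ω), B :=
          Finset.sum_le_sum fun i _ => min_le_right _ _
      _ = truncGW X B n ω * B := by simp [Finset.sum_const, Nat.smul_one_eq_cast, mul_comm]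
      _ ≤ B ^ n * B := Nat.mul_le_mul_right _ (truncGW_le_pow X B n ω)
      _ = B ^ (n+1) := (pow_succ B n).symm

lemma truncGW_le {Y : ℕ → Ω → ℕ}
    (hY : ∀ n ω, Y (n + 1) ω = ∑ i ∈ Finset.range (Y n ω), X n i ω)
    (hY0 : ∀ ω, Y 0 ω = 1) : ∀ n ω, truncGW X B n ω ≤ Y n ω
  | 0, ω => le_of_eq (hY0 ω).symm
  | n+1, ω => by
    rw [hY n ω]
    calc ∑ i ∈ Finset.range (truncGW X B n ω), min (X n i ω) B
        ≤ ∑ i ∈ Finset.range (truncGW X B n ω), X n i ω :=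
          Finset.sum_le_sum fun i _ => min_le_left _ _
      _ ≤ ∑ i ∈ Finset.range (Y n ω), X n i ω :=
          Finset.sum_le_sum_of_subset
            (Finset.range_subset_range.2 (truncGW_le hY hY0 n ω))

lemma truncGW_antitone (n : ℕ) (ω : Ω) (h : truncGW X B n ω = 0) :
    truncGW X B (n+1) ω = 0 := by
  simp [truncGW, h]

/-- The σ-algebra of the past before time `n`. -/
def pastMS (X : ℕ → ℕ → Ω → ℕ) (n : ℕ) : MeasurableSpace Ω :=
  ⨆ p ∈ {q : ℕ × ℕ | q.1 < n}, MeasurableSpace.comap (X p.1 p.2) inferInstance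

lemma pastMS_mono {n m : ℕ} (h : n ≤ m) : pastMS X n ≤ pastMS X m := by
  refine iSup₂_le fun p hp => ?_
  exact le_iSup₂ (f := fun (p : ℕ × ℕ) (_ : p ∈ {q : ℕ × ℕ | q.1 < m}) =>
    MeasurableSpace.comap (X p.1 p.2) inferInstance) p (lt_of_lt_of_le hp h)

lemma pastMS_le (hX : ∀ n i, Measurable (X n i)) (n : ℕ) :
    pastMS X n ≤ ‹MeasurableSpace Ω› :=
  iSup₂_le fun p _ => measurable_iff_comap_le.1 (hX p.1 p.2)

lemma comap_le_pastMS {p : ℕ × ℕ} {n : ℕ} (h : p.1 < n) :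
    MeasurableSpace.comap (X p.1 p.2) inferInstance ≤ pastMS X n :=
  le_iSup₂ (f := fun (p : ℕ × ℕ) (_ : p ∈ {q : ℕ × ℕ | q.1 < n}) =>
    MeasurableSpace.comap (X p.1 p.2) inferInstance) p h

lemma sum_range_ite {α : Type*} [AddCommMonoid α] (a : ℕ → α) {t M : ℕ} (h : t ≤ M) :
    ∑ i ∈ Finset.range t, a i = ∑ i ∈ Finset.range M, if i < t then a i else 0 := by
  rw [← Finset.sum_filter]
  congr 1
  ext i
  simp only [Finset.mem_filter, Finset.mem_range]
  omega

lemma measurable_min_trunc (n i B : ℕ) :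
    Measurable[MeasurableSpace.comap (X n i) inferInstance]
      (fun ω => ((min (X n i ω) B : ℕ) : ℝ≥0∞)) := by
  have h1 : Measurable[MeasurableSpace.comap (X n i) inferInstance] (X n i) :=
    Measurable.of_comap_le le_rfl
  exact (measurable_of_countable (fun k : ℕ => ((min k B : ℕ) : ℝ≥0∞))).comp h1

lemma truncGW_measurable_past (B : ℕ) : ∀ n, Measurable[pastMS X n] (truncGW X B n)
  | 0 => measurable_const
  | n+1 => by
    have ht : Measurable[pastMS X (n+1)] (truncGW X B n) :=
      (truncGW_measurable_past B n).mono (pastMS_mono (Nat.le_succ n)) le_rfl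
    have : (truncGW X B (n+1)) = fun ω => ∑ i ∈ Finset.range (B ^ n),
        if i < truncGW X B n ω then min (X n i ω) B else 0 := by
      funext ω
      exact sum_range_ite _ (truncGW_le_pow X B n ω)
    rw [this]
    refine Finset.measurable_sum _ fun i _ => Measurable.ite ?_ ?_ measurable_const
    · exact (measurableSet_lt measurable_const ht)
    · have h1 : Measurable[pastMS X (n+1)] (X n i) :=
        (Measurable.of_comap_le le_rfl).mono
          (comap_le_pastMS (p := (n, i)) (Nat.lt_succ_self n)) le_rfl
      exact h1.min measurable_const

end GWaux


section GWaux2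
variable {Ω : Type} [MeasurableSpace Ω] {X : ℕ → ℕ → Ω → ℕ}
def currMS (X : ℕ → ℕ → Ω → ℕ) (n : ℕ) : MeasurableSpace Ω :=
  ⨆ p ∈ {q : ℕ × ℕ | q.1 < n}ᶜ, MeasurableSpace.comap (X p.1 p.2) inferInstance

lemma comap_le_currMS {n i : ℕ} :
    MeasurableSpace.comap (X n i) inferInstance ≤ currMS X n :=
  le_iSup₂ (f := fun (p : ℕ × ℕ) (_ : p ∈ {q : ℕ × ℕ | q.1 < n}ᶜ) =>
    MeasurableSpace.comap (X p.1 p.2) inferInstance) (n, i) (by simp)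

lemma currMS_le (hX : ∀ n i, Measurable (X n i)) (n : ℕ) :
    currMS X n ≤ ‹MeasurableSpace Ω› :=
  iSup₂_le fun p _ => measurable_iff_comap_le.1 (hX p.1 p.2)

lemma pastMS_le' (hX : ∀ n i, Measurable (X n i)) (n : ℕ) :
    pastMS X n ≤ ‹MeasurableSpace Ω› :=
  iSup₂_le fun p _ => measurable_iff_comap_le.1 (hX p.1 p.2)

variable {P : Measure Ω} [IsProbabilityMeasure P]

lemma indep_past_curr (hX : ∀ n i, Measurable (X n i))
    (hind : iIndepFun (fun p : ℕ × ℕ => X p.1 p.2) P) (n : ℕ) :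
    Indep (pastMS X n) (currMS X n) P := by
  have h : iIndep (fun p : ℕ × ℕ => MeasurableSpace.comap (X p.1 p.2) inferInstance) P :=
    (iIndepFun_iff_iIndep _ _ _).1 hind
  unfold pastMS currMS
  exact indep_biSup_compl
    (s := fun p : ℕ × ℕ => MeasurableSpace.comap (X p.1 p.2) inferInstance)
    (fun p => measurable_iff_comap_le.1 (hX p.1 p.2)) h {q : ℕ × ℕ | q.1 < n}

lemma lintegral_mul_past_curr (hX : ∀ n i, Measurable (X n i))
    (hind : iIndepFun (fun p : ℕ × ℕ => X p.1 p.2) P) (n : ℕ)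
    {φ ψ : Ω → ℝ≥0∞} (hφ : Measurable[pastMS X n] φ) (hψ : Measurable[currMS X n] ψ) :
    ∫⁻ ω, φ ω * ψ ω ∂P = (∫⁻ ω, φ ω ∂P) * ∫⁻ ω, ψ ω ∂P := by
  have hIndep : IndepFun φ ψ P := by
    rw [IndepFun_iff_Indep]
    refine indep_of_indep_of_le_left (indep_of_indep_of_le_right
      (indep_past_curr hX hind n) ?_) ?_
    · exact measurable_iff_comap_le.1 hψ
    · exact measurable_iff_comap_le.1 hφ
  exact lintegral_mul_eq_lintegral_mul_lintegral_of_indepFun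
    (hφ.mono (pastMS_le' hX n) le_rfl) (hψ.mono (currMS_le hX n) le_rfl) hIndep

end GWaux2
section Moments
variable {Ω : Type} [MeasurableSpace Ω] {X : ℕ → ℕ → Ω → ℕ}
variable {P : Measure Ω} [IsProbabilityMeasure P]
variable {ν : Measure ℕ} [IsProbabilityMeasure ν] {B : ℕ}

lemma lintegral_comp_marginal (hX : ∀ n i, Measurable (X n i))
    (hmap : ∀ n i, Measure.map (X n i) P = ν) (n i : ℕ) (g : ℕ → ℝ≥0∞) :
    ∫⁻ ω, g (X n i ω) ∂P = ∫⁻ x, g x ∂ν := by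
  rw [← hmap n i, lintegral_map (measurable_of_countable g) (hX n i)]

lemma measurable_f (hX : ∀ n i, Measurable (X n i)) (n i : ℕ) :
    Measurable (fun ω => ((min (X n i ω) B : ℕ) : ℝ≥0∞)) :=
  (measurable_of_countable (fun k : ℕ => ((min k B : ℕ) : ℝ≥0∞))).comp (hX n i)

lemma Eff (hX : ∀ n i, Measurable (X n i))
    (hind : iIndepFun (fun p : ℕ × ℕ => X p.1 p.2) P)
    (hmap : ∀ n i, Measure.map (X n i) P = ν) {n i j : ℕ} (hij : i ≠ j) :
    ∫⁻ ω, ((min (X n i ω) B : ℕ) : ℝ≥0∞) * ((min (X n j ω) B : ℕ) : ℝ≥0∞) ∂P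
      = (∫⁻ x, ((min x B : ℕ) : ℝ≥0∞) ∂ν) * ∫⁻ x, ((min x B : ℕ) : ℝ≥0∞) ∂ν := by
  have hpair : IndepFun (X n i) (X n j) P := by
    have := hind.indepFun (i := (n, i)) (j := (n, j))
      (by simp [Prod.ext_iff, hij])
    exact this
  have hIF : IndepFun (fun ω => ((min (X n i ω) B : ℕ) : ℝ≥0∞))
      (fun ω => ((min (X n j ω) B : ℕ) : ℝ≥0∞)) P :=
    hpair.comp (measurable_of_countable (fun k : ℕ => ((min k B : ℕ) : ℝ≥0∞)))
      (measurable_of_countable (fun k : ℕ => ((min k B : ℕ) : ℝ≥0∞)))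
  rw [lintegral_mul_eq_lintegral_mul_lintegral_of_indepFun'' (measurable_f hX n i).aemeasurable
    (measurable_f hX n j).aemeasurable hIF,
    lintegral_comp_marginal hX hmap n i (fun k => ((min k B : ℕ) : ℝ≥0∞)),
    lintegral_comp_marginal hX hmap n j (fun k => ((min k B : ℕ) : ℝ≥0∞))]

lemma moment_rec (hX : ∀ n i, Measurable (X n i))
    (hind : iIndepFun (fun p : ℕ × ℕ => X p.1 p.2) P)
    (hmap : ∀ n i, Measure.map (X n i) P = ν) (n : ℕ) :
    (∫⁻ ω, ((truncGW X B (n+1) ω : ℕ) : ℝ≥0∞) ∂P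
      = (∫⁻ ω, ((truncGW X B n ω : ℕ) : ℝ≥0∞) ∂P) * ∫⁻ x, ((min x B : ℕ) : ℝ≥0∞) ∂ν) ∧
    (∫⁻ ω, ((truncGW X B (n+1) ω : ℕ) : ℝ≥0∞) ^ 2 ∂P
      ≤ (∫⁻ ω, ((truncGW X B n ω : ℕ) : ℝ≥0∞) ∂P) * (∫⁻ x, ((min x B : ℕ) : ℝ≥0∞) ^ 2 ∂ν)
        + (∫⁻ ω, ((truncGW X B n ω : ℕ) : ℝ≥0∞) ^ 2 ∂P)
          * ((∫⁻ x, ((min x B : ℕ) : ℝ≥0∞) ∂ν) * ∫⁻ x, ((min x B : ℕ) : ℝ≥0∞) ∂ν)) := by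
  classical
  set m1 := ∫⁻ x, ((min x B : ℕ) : ℝ≥0∞) ∂ν with hm1
  set m2 := ∫⁻ x, ((min x B : ℕ) : ℝ≥0∞) ^ 2 ∂ν with hm2
  set M := B ^ n with hM
  set t := truncGW X B n with ht
  set f : ℕ → Ω → ℝ≥0∞ := fun i ω => ((min (X n i ω) B : ℕ) : ℝ≥0∞) with hf
  set ind : ℕ → Ω → ℝ≥0∞ := fun i ω => if i < t ω then 1 else 0 with hind'
  set g : ℕ → Ω → ℝ≥0∞ := fun i ω => ind i ω * f i ω with hg
  -- measurability
  have ht_past : Measurable[pastMS X n] t := truncGW_measurable_past B n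
  have ht_amb : Measurable t := ht_past.mono (pastMS_le hX n) le_rfl
  have hind_past : ∀ i, Measurable[pastMS X n] (ind i) := fun i =>
    Measurable.ite (measurableSet_lt measurable_const ht_past) measurable_const measurable_const
  have hind_amb : ∀ i, Measurable (ind i) := fun i =>
    Measurable.ite (measurableSet_lt measurable_const ht_amb) measurable_const measurable_const
  have hf_curr : ∀ i, Measurable[currMS X n] (f i) := fun i =>
    (measurable_min_trunc n i B).mono comap_le_currMS le_rfl
  have hf_amb : ∀ i, Measurable (f i) := fun i => measurable_f hX n i
  have hg_amb : ∀ i, Measurable (g i) := fun i => (hind_amb i).mul (hf_amb i)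
  -- pointwise identities
  have hptA : ∀ ω, ((truncGW X B (n+1) ω : ℕ) : ℝ≥0∞) = ∑ i ∈ Finset.range M, g i ω := by
    intro ω
    have : truncGW X B (n+1) ω = ∑ i ∈ Finset.range (t ω), min (X n i ω) B := rfl
    rw [this, sum_range_ite _ (truncGW_le_pow X B n ω), Nat.cast_sum]
    refine Finset.sum_congr rfl fun i _ => ?_
    by_cases h : i < t ω <;> simp [hg, hind', h, hf, ← ht]
  have hptB : ∀ ω, ∑ i ∈ Finset.range M, ind i ω = ((t ω : ℕ) : ℝ≥0∞) := by
    intro ω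
    rw [show (∑ i ∈ Finset.range M, ind i ω) = ∑ i ∈ Finset.range M,
        (if i < t ω then (1:ℝ≥0∞) else 0) from rfl,
      ← sum_range_ite (fun _ => (1:ℝ≥0∞)) (truncGW_le_pow X B n ω)]
    simp
    rfl
  -- expectations of indicators
  have hind_int : ∀ i, ∫⁻ ω, ind i ω ∂P = P {ω | i < t ω} := by
    intro i
    have : (fun ω => ind i ω) = Set.indicator {ω | i < t ω} (fun _ => (1:ℝ≥0∞)) := by
      funext ω; by_cases h : i < t ω <;> simp [hind', h, Set.indicator_apply]
    rw [this]
    exact lintegral_indicator_one (measurableSet_lt measurable_const ht_amb)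
  -- expectations of f
  have hf_int : ∀ i, ∫⁻ ω, f i ω ∂P = m1 := fun i =>
    lintegral_comp_marginal hX hmap n i (fun k => ((min k B : ℕ) : ℝ≥0∞))
  have hf2_int : ∀ i, ∫⁻ ω, (f i ω) ^ 2 ∂P = m2 := fun i =>
    lintegral_comp_marginal hX hmap n i (fun k => ((min k B : ℕ) : ℝ≥0∞) ^ 2)
  constructor
  · -- first moment
    calc ∫⁻ ω, ((truncGW X B (n+1) ω : ℕ) : ℝ≥0∞) ∂P
        = ∫⁻ ω, ∑ i ∈ Finset.range M, g i ω ∂P := by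
          congr 1; funext ω; exact hptA ω
      _ = ∑ i ∈ Finset.range M, ∫⁻ ω, g i ω ∂P :=
          lintegral_finset_sum _ (fun i _ => hg_amb i)
      _ = ∑ i ∈ Finset.range M, (∫⁻ ω, ind i ω ∂P) * m1 := by
          refine Finset.sum_congr rfl fun i _ => ?_
          rw [show (∫⁻ ω, g i ω ∂P) = ∫⁻ ω, ind i ω * f i ω ∂P from rfl,
            lintegral_mul_past_curr hX hind n (hind_past i) (hf_curr i), hf_int i]
      _ = (∑ i ∈ Finset.range M, ∫⁻ ω, ind i ω ∂P) * m1 := (Finset.sum_mul _ _ _).symm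
      _ = (∫⁻ ω, ((t ω : ℕ) : ℝ≥0∞) ∂P) * m1 := by
          rw [← lintegral_finset_sum _ (fun i _ => hind_amb i)]
          congr 1; congr 1; funext ω; exact hptB ω
  · -- second moment
    have key : ∀ i j, ∫⁻ ω, g i ω * g j ω ∂P
        ≤ (∫⁻ ω, ind i ω * ind j ω ∂P) * (m1 * m1)
          + (if i = j then (∫⁻ ω, ind i ω ∂P) * m2 else 0) := by
      intro i j
      by_cases hij : i = j
      · subst hij
        simp only [if_pos rfl]
        have hpt : ∀ ω, g i ω * g i ω = ind i ω * (f i ω) ^ 2 := by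
          intro ω
          by_cases h : i < t ω <;> simp [hg, hind', h, pow_two] <;> ring
        calc ∫⁻ ω, g i ω * g i ω ∂P = ∫⁻ ω, ind i ω * (f i ω) ^ 2 ∂P := by
              congr 1; funext ω; exact hpt ω
          _ = (∫⁻ ω, ind i ω ∂P) * ∫⁻ ω, (f i ω) ^ 2 ∂P := by
              refine lintegral_mul_past_curr hX hind n (hind_past i) ?_
              exact (hf_curr i).pow_const 2
          _ = (∫⁻ ω, ind i ω ∂P) * m2 := by rw [hf2_int i]
          _ ≤ _ := le_add_self
      · simp only [if_neg hij, add_zero]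
        have hpt : ∀ ω, g i ω * g j ω = (ind i ω * ind j ω) * (f i ω * f j ω) := by
          intro ω; simp only [hg]; ring
        calc ∫⁻ ω, g i ω * g j ω ∂P
            = ∫⁻ ω, (ind i ω * ind j ω) * (f i ω * f j ω) ∂P := by
              congr 1; funext ω; exact hpt ω
          _ = (∫⁻ ω, ind i ω * ind j ω ∂P) * ∫⁻ ω, f i ω * f j ω ∂P :=
              lintegral_mul_past_curr hX hind n ((hind_past i).mul (hind_past j))
                ((hf_curr i).mul (hf_curr j))
          _ = (∫⁻ ω, ind i ω * ind j ω ∂P) * (m1 * m1) := by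
              rw [Eff hX hind hmap hij]
          _ ≤ _ := le_rfl
    calc ∫⁻ ω, ((truncGW X B (n+1) ω : ℕ) : ℝ≥0∞) ^ 2 ∂P
        = ∫⁻ ω, ∑ i ∈ Finset.range M, ∑ j ∈ Finset.range M, g i ω * g j ω ∂P := by
          congr 1; funext ω
          rw [hptA ω, pow_two, Finset.sum_mul_sum]
      _ = ∑ i ∈ Finset.range M, ∑ j ∈ Finset.range M, ∫⁻ ω, g i ω * g j ω ∂P := by
          rw [lintegral_finset_sum _ (fun i _ => Finset.measurable_sum (f := fun j ω => g i ω * g j ω) _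
            (fun j _ => (hg_amb i).mul (hg_amb j)))]
          exact Finset.sum_congr rfl fun i _ =>
            lintegral_finset_sum _ (fun j _ => (hg_amb i).mul (hg_amb j))
      _ ≤ ∑ i ∈ Finset.range M, ∑ j ∈ Finset.range M,
            ((∫⁻ ω, ind i ω * ind j ω ∂P) * (m1 * m1)
              + if i = j then (∫⁻ ω, ind i ω ∂P) * m2 else 0) :=
          Finset.sum_le_sum fun i _ => Finset.sum_le_sum fun j _ => key i j
      _ = (∑ i ∈ Finset.range M, ∑ j ∈ Finset.range M, ∫⁻ ω, ind i ω * ind j ω ∂P) * (m1 * m1)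
            + ∑ i ∈ Finset.range M, (∫⁻ ω, ind i ω ∂P) * m2 := by
          simp only [Finset.sum_add_distrib]
          congr 1
          · rw [Finset.sum_mul]
            exact Finset.sum_congr rfl fun i _ => (Finset.sum_mul _ _ _).symm
          · refine Finset.sum_congr rfl fun i hi => ?_
            rw [Finset.sum_ite_eq (Finset.range M) i
              (fun _ => (∫⁻ ω, ind i ω ∂P) * m2), if_pos hi]
      _ = (∫⁻ ω, ((t ω : ℕ) : ℝ≥0∞) ^ 2 ∂P) * (m1 * m1)
            + (∫⁻ ω, ((t ω : ℕ) : ℝ≥0∞) ∂P) * m2 := by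
          congr 2
          · rw [show (∑ i ∈ Finset.range M, ∑ j ∈ Finset.range M, ∫⁻ ω, ind i ω * ind j ω ∂P)
                = ∑ i ∈ Finset.range M, ∫⁻ ω, ∑ j ∈ Finset.range M, ind i ω * ind j ω ∂P from
              Finset.sum_congr rfl fun i _ =>
                (lintegral_finset_sum _ (fun j _ => (hind_amb i).mul (hind_amb j))).symm,
              ← lintegral_finset_sum _ (fun i _ => Finset.measurable_sum (f := fun j ω => ind i ω * ind j ω) _
                (fun j _ => (hind_amb i).mul (hind_amb j)))]
            congr 1; funext ω
            rw [show (∑ i ∈ Finset.range M, ∑ j ∈ Finset.range M, ind i ω * ind j ω)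
                = (∑ i ∈ Finset.range M, ind i ω) * ∑ j ∈ Finset.range M, ind j ω from
              (Finset.sum_mul_sum _ _ _ _).symm, hptB ω, pow_two]
          · rw [← Finset.sum_mul, ← lintegral_finset_sum _ (fun i _ => hind_amb i)]
            congr 2; funext ω; exact hptB ω
      _ = _ := by rw [add_comm]
  done

end Moments
section PZ
variable {Ω : Type} [MeasurableSpace Ω] {X : ℕ → ℕ → Ω → ℕ}
variable {P : Measure Ω} [IsProbabilityMeasure P]
variable {ν : Measure ℕ} [IsProbabilityMeasure ν] {B : ℕ}

lemma E_eq (hX : ∀ n i, Measurable (X n i))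
    (hind : iIndepFun (fun p : ℕ × ℕ => X p.1 p.2) P)
    (hmap : ∀ n i, Measure.map (X n i) P = ν) :
    ∀ n, ∫⁻ ω, ((truncGW X B n ω : ℕ) : ℝ≥0∞) ∂P = (∫⁻ x, ((min x B : ℕ) : ℝ≥0∞) ∂ν) ^ n
  | 0 => by
    simp only [truncGW, Nat.cast_one, pow_zero]
    simp
  | n+1 => by
    rw [(moment_rec hX hind hmap n).1, E_eq hX hind hmap n, pow_succ]

lemma S_le (hX : ∀ n i, Measurable (X n i))
    (hind : iIndepFun (fun p : ℕ × ℕ => X p.1 p.2) P)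
    (hmap : ∀ n i, Measure.map (X n i) P = ν)
    (hm1_one : 1 < ∫⁻ x, ((min x B : ℕ) : ℝ≥0∞) ∂ν)
    (hm1_top : (∫⁻ x, ((min x B : ℕ) : ℝ≥0∞) ∂ν) ≠ ⊤) :
    ∀ n, ∫⁻ ω, ((truncGW X B n ω : ℕ) : ℝ≥0∞) ^ 2 ∂P
      ≤ (1 + (∫⁻ x, ((min x B : ℕ) : ℝ≥0∞) ^ 2 ∂ν)
          * ∑ j ∈ Finset.range n, ((∫⁻ x, ((min x B : ℕ) : ℝ≥0∞) ∂ν)⁻¹) ^ (j+2))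
        * (∫⁻ x, ((min x B : ℕ) : ℝ≥0∞) ∂ν) ^ (2*n)
  | 0 => by
    simp only [truncGW, Nat.cast_one, one_pow, Finset.range_zero, Finset.sum_empty,
      mul_zero, add_zero, mul_one, one_mul, Nat.mul_zero, pow_zero]
    simp
  | n+1 => by
    set m1 := ∫⁻ x, ((min x B : ℕ) : ℝ≥0∞) ∂ν with hm1def
    set m2 := ∫⁻ x, ((min x B : ℕ) : ℝ≥0∞) ^ 2 ∂ν with hm2def
    have hm0 : m1 ≠ 0 := (zero_lt_one.trans hm1_one).ne'
    have hkey : (m1⁻¹) ^ (n+2) * m1 ^ (2*(n+1)) = m1 ^ n := by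
      rw [← ENNReal.inv_pow, show 2*(n+1) = (n+2)+n by ring, pow_add m1 (n+2) n,
        ← mul_assoc,
        ENNReal.inv_mul_cancel (pow_ne_zero _ hm0) (pow_ne_top hm1_top), one_mul]
    calc ∫⁻ ω, ((truncGW X B (n+1) ω : ℕ) : ℝ≥0∞) ^ 2 ∂P
        ≤ (∫⁻ ω, ((truncGW X B n ω : ℕ) : ℝ≥0∞) ∂P) * m2
          + (∫⁻ ω, ((truncGW X B n ω : ℕ) : ℝ≥0∞) ^ 2 ∂P) * (m1 * m1) :=
          (moment_rec hX hind hmap n).2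
      _ ≤ m1 ^ n * m2
          + ((1 + m2 * ∑ j ∈ Finset.range n, (m1⁻¹) ^ (j+2)) * m1 ^ (2*n)) * (m1 * m1) := by
          rw [E_eq hX hind hmap n]
          gcongr
          exact S_le hX hind hmap hm1_one hm1_top n
      _ = m2 * ((m1⁻¹) ^ (n+2) * m1 ^ (2*(n+1)))
          + ((1 + m2 * ∑ j ∈ Finset.range n, (m1⁻¹) ^ (j+2)) * m1 ^ (2*n)) * (m1 * m1) := by
          rw [hkey]; ring
      _ = (1 + m2 * ∑ j ∈ Finset.range (n+1), (m1⁻¹) ^ (j+2)) * m1 ^ (2*(n+1)) := by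
          rw [Finset.sum_range_succ]
          ring
end PZ
section PZ2
variable {Ω : Type} [MeasurableSpace Ω] {X : ℕ → ℕ → Ω → ℕ}
variable {P : Measure Ω} [IsProbabilityMeasure P]
variable {ν : Measure ℕ} [IsProbabilityMeasure ν] {B : ℕ}

lemma survival_lb (hX : ∀ n i, Measurable (X n i))
    (hind : iIndepFun (fun p : ℕ × ℕ => X p.1 p.2) P)
    (hmap : ∀ n i, Measure.map (X n i) P = ν)
    (hm1_one : 1 < ∫⁻ x, ((min x B : ℕ) : ℝ≥0∞) ∂ν)
    (hm1_top : (∫⁻ x, ((min x B : ℕ) : ℝ≥0∞) ∂ν) ≠ ⊤)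
    (hm2_top : (∫⁻ x, ((min x B : ℕ) : ℝ≥0∞) ^ 2 ∂ν) ≠ ⊤) (n : ℕ) :
    (4 * (1 + (∫⁻ x, ((min x B : ℕ) : ℝ≥0∞) ^ 2 ∂ν)
      * (1 - (∫⁻ x, ((min x B : ℕ) : ℝ≥0∞) ∂ν)⁻¹)⁻¹))⁻¹
      ≤ P {ω | truncGW X B n ω ≠ 0} := by
  set m1 := ∫⁻ x, ((min x B : ℕ) : ℝ≥0∞) ∂ν with hm1def
  set m2 := ∫⁻ x, ((min x B : ℕ) : ℝ≥0∞) ^ 2 ∂ν with hm2def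
  set r := m1⁻¹ with hrdef
  set K := 1 + m2 * (1 - r)⁻¹ with hKdef
  set t := truncGW X B n with htdef
  set Z : Ω → ℝ≥0∞ := fun ω => ((t ω : ℕ) : ℝ≥0∞) with hZdef
  set A := {ω | t ω ≠ 0} with hAdef
  have hm0 : m1 ≠ 0 := (zero_lt_one.trans hm1_one).ne'
  have hr1 : r < 1 := ENNReal.inv_lt_one.2 hm1_one
  have hrne : (1:ℝ≥0∞) - r ≠ 0 := by
    have : (0:ℝ≥0∞) < 1 - r := tsub_pos_iff_lt.2 hr1
    exact this.ne'
  have hK_top : K ≠ ⊤ := by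
    rw [hKdef]
    exact ENNReal.add_ne_top.2 ⟨ENNReal.one_ne_top,
      ENNReal.mul_ne_top hm2_top (ENNReal.inv_ne_top.2 hrne)⟩
  have hK0 : K ≠ 0 := by
    rw [hKdef]
    exact (lt_of_lt_of_le zero_lt_one le_self_add).ne'
  have hpow_top : ∀ k : ℕ, m1 ^ k ≠ ⊤ := fun k => pow_ne_top hm1_top
  have hpow0 : ∀ k : ℕ, m1 ^ k ≠ 0 := fun k => pow_ne_zero k hm0
  -- measurability
  have ht_amb : Measurable t :=
    (truncGW_measurable_past (X := X) B n).mono (pastMS_le hX n) le_rfl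
  have hZ_amb : Measurable Z :=
    (measurable_of_countable (fun k : ℕ => ((k : ℕ) : ℝ≥0∞))).comp ht_amb
  have hA_meas : MeasurableSet A := by
    have : A = t ⁻¹' ({0}ᶜ) := rfl
    rw [this]
    exact ht_amb (MeasurableSet.compl (measurableSet_singleton 0))
  -- the S bound
  have hS : ∫⁻ ω, Z ω ^ 2 ∂P ≤ K * m1 ^ (2*n) := by
    refine le_trans (S_le hX hind hmap hm1_one hm1_top n) ?_
    refine mul_le_mul_left (add_le_add_right (mul_le_mul_right ?_ m2) 1) _
    calc ∑ j ∈ Finset.range n, r ^ (j+2)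
        ≤ ∑ j ∈ Finset.range n, r ^ j := by
          refine Finset.sum_le_sum fun j _ => ?_
          exact pow_le_pow_right_of_le_one' hr1.le (by omega)
      _ ≤ ∑' j : ℕ, r ^ j := ENNReal.sum_le_tsum _
      _ = (1 - r)⁻¹ := ENNReal.tsum_geometric r
  have hE : ∫⁻ ω, Z ω ∂P = m1 ^ n := E_eq hX hind hmap n
  -- pointwise inequality
  set c := 2 * K * m1 ^ n with hcdef
  have hpt : ∀ ω, Z ω * c ≤ c^2 * A.indicator (1 : Ω → ℝ≥0∞) ω + Z ω ^ 2 := by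
    intro ω
    by_cases h0 : t ω = 0
    · have : Z ω = 0 := by simp [hZdef, h0]
      rw [this, zero_mul]
      exact bot_le
    · have hmem : ω ∈ A := h0
      rw [Set.indicator_of_mem hmem, Pi.one_apply, mul_one]
      by_cases hc : Z ω ≤ c
      · calc Z ω * c ≤ c * c := mul_le_mul_left hc c
          _ = c ^ 2 := (sq c).symm
          _ ≤ c ^ 2 + Z ω ^ 2 := le_self_add
      · calc Z ω * c ≤ Z ω * Z ω := mul_le_mul_right (le_of_not_ge hc) _
          _ = Z ω ^ 2 := (sq (Z ω)).symm
          _ ≤ c ^ 2 + Z ω ^ 2 := le_add_self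
  -- integrate
  have hint : m1 ^ n * c ≤ c^2 * P A + K * m1 ^ (2*n) := by
    calc m1 ^ n * c = (∫⁻ ω, Z ω ∂P) * c := by rw [hE]
      _ = ∫⁻ ω, Z ω * c ∂P := (lintegral_mul_const c hZ_amb).symm
      _ ≤ ∫⁻ ω, (c^2 * A.indicator (1 : Ω → ℝ≥0∞) ω + Z ω ^ 2) ∂P :=
          lintegral_mono hpt
      _ = ∫⁻ ω, c^2 * A.indicator (1 : Ω → ℝ≥0∞) ω ∂P + ∫⁻ ω, Z ω ^ 2 ∂P :=
          lintegral_add_left (measurable_const.mul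
            (measurable_one.indicator hA_meas)) _
      _ = c^2 * P A + ∫⁻ ω, Z ω ^ 2 ∂P := by
          rw [lintegral_const_mul _ (measurable_one.indicator hA_meas),
            lintegral_indicator_one hA_meas]
      _ ≤ c^2 * P A + K * m1 ^ (2*n) := by gcongr
  have heq1 : m1 ^ n * c = K * m1 ^ (2*n) + K * m1 ^ (2*n) := by
    rw [hcdef, show 2*n = n + n by ring, pow_add]; ring
  have heq2 : c ^ 2 = (4 * K) * (K * m1 ^ (2*n)) := by
    rw [hcdef, show 2*n = n + n by ring, pow_add]; ring
  rw [heq1, heq2] at hint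
  have hfin : K * m1 ^ (2*n) ≠ ⊤ := ENNReal.mul_ne_top hK_top (hpow_top _)
  have hfin0 : K * m1 ^ (2*n) ≠ 0 := mul_ne_zero hK0 (hpow0 _)
  rw [add_comm (4 * K * (K * m1 ^ (2*n)) * P A) (K * m1 ^ (2*n))] at hint
  have hint2 : K * m1 ^ (2*n) ≤ 4 * K * (K * m1 ^ (2*n)) * P A :=
    (ENNReal.add_le_add_iff_left hfin).1 hint
  have hint3 : (K * m1 ^ (2*n)) * 1 ≤ (K * m1 ^ (2*n)) * (4 * K * P A) := by
    calc (K * m1 ^ (2*n)) * 1 = K * m1 ^ (2*n) := mul_one _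
      _ ≤ 4 * K * (K * m1 ^ (2*n)) * P A := hint2
      _ = (K * m1 ^ (2*n)) * (4 * K * P A) := by ring
  have h1le : 1 ≤ 4 * K * P A := by
    exact (ENNReal.mul_le_mul_iff_right hfin0 hfin).1 hint3
  have h4K0 : (4:ℝ≥0∞) * K ≠ 0 := mul_ne_zero (by norm_num) hK0
  have h4Ktop : (4:ℝ≥0∞) * K ≠ ⊤ := ENNReal.mul_ne_top (by norm_num) hK_top
  calc (4 * K)⁻¹ = (4 * K)⁻¹ * 1 := (mul_one _).symm
    _ ≤ (4 * K)⁻¹ * (4 * K * P A) := mul_le_mul_right h1le _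
    _ = ((4 * K)⁻¹ * (4 * K)) * P A := by ring
    _ = P A := by rw [ENNReal.inv_mul_cancel h4K0 h4Ktop, one_mul]
end PZ2

/-- A Galton–Watson process: `X n i` are i.i.d. with law `ν`, and
`Y (n+1) = ∑_{i < Y n} X n i`. -/
def IsGW {Ω : Type} [MeasurableSpace Ω] (P : Measure Ω) (ν : Measure ℕ)
    (X : ℕ → ℕ → Ω → ℕ) (Y : ℕ → Ω → ℕ) : Prop :=
  (∀ n i, Measurable (X n i)) ∧
  iIndepFun (fun p : ℕ × ℕ => X p.1 p.2) P ∧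
  (∀ n i, Measure.map (X n i) P = ν) ∧
  ∀ n ω, Y (n + 1) ω = ∑ i ∈ Finset.range (Y n ω), X n i ω

/-- If a·P^N(Y₁ ≥ a·N) > 1 for some integers N, a ≥ 1, then the Galton–Watson
process started from one individual survives with positive probability. -/
theorem stmt12 {Ω1 ΩN : Type} [MeasurableSpace Ω1] [MeasurableSpace ΩN]
    (P1 : Measure Ω1) (PN : Measure ΩN)
    [IsProbabilityMeasure P1] [IsProbabilityMeasure PN]
    (ν : Measure ℕ) [IsProbabilityMeasure ν]
    (X1 : ℕ → ℕ → Ω1 → ℕ) (Y1 : ℕ → Ω1 → ℕ)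
    (XN : ℕ → ℕ → ΩN → ℕ) (YN : ℕ → ΩN → ℕ)
    (h1 : IsGW P1 ν X1 Y1) (h10 : ∀ ω, Y1 0 ω = 1)
    (N a : ℕ) (hN : 1 ≤ N) (ha : 1 ≤ a)
    (hN' : IsGW PN ν XN YN) (hN0 : ∀ ω, YN 0 ω = N)
    (hyp : 1 < (a : ℝ≥0∞) * PN {ω | a * N ≤ YN 1 ω}) :
    0 < P1 {ω | ∀ k, Y1 k ω ≠ 0} := by
  obtain ⟨hX1, hind1, hmap1, hY1⟩ := h1
  obtain ⟨hXN, hindN, hmapN, hYN⟩ := hN'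
  -- Step 1: the mean of ν is > 1
  set m : ℝ≥0∞ := ∫⁻ x, (x : ℝ≥0∞) ∂ν with hmdef
  have hy1 : ∀ ω, YN 1 ω = ∑ i ∈ Finset.range N, XN 0 i ω := by
    intro ω; rw [hYN 0 ω, hN0 ω]
  have hmeasYN : Measurable (fun ω => ((YN 1 ω : ℕ) : ℝ≥0∞)) := by
    have : (fun ω => ((YN 1 ω : ℕ) : ℝ≥0∞))
        = fun ω => ((∑ i ∈ Finset.range N, XN 0 i ω : ℕ) : ℝ≥0∞) := by
      funext ω; rw [hy1 ω]
    rw [this]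
    exact (measurable_of_countable (fun k : ℕ => (k : ℝ≥0∞))).comp
      (Finset.measurable_sum _ fun i _ => hXN 0 i)
  have hEy : ∫⁻ ω, ((YN 1 ω : ℕ) : ℝ≥0∞) ∂PN = N * m := by
    calc ∫⁻ ω, ((YN 1 ω : ℕ) : ℝ≥0∞) ∂PN
        = ∫⁻ ω, ∑ i ∈ Finset.range N, ((XN 0 i ω : ℕ) : ℝ≥0∞) ∂PN := by
          congr 1; funext ω; rw [hy1 ω, Nat.cast_sum]
      _ = ∑ i ∈ Finset.range N, ∫⁻ ω, ((XN 0 i ω : ℕ) : ℝ≥0∞) ∂PN :=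
          lintegral_finset_sum _ fun i _ =>
            (measurable_of_countable (fun k : ℕ => (k : ℝ≥0∞))).comp (hXN 0 i)
      _ = ∑ _i ∈ Finset.range N, m := by
          refine Finset.sum_congr rfl fun i _ => ?_
          exact lintegral_comp_marginal hXN hmapN 0 i (fun k => (k : ℝ≥0∞))
      _ = N * m := by rw [Finset.sum_const, Finset.card_range, nsmul_eq_mul]
  have hsetEq : {ω | ((a * N : ℕ) : ℝ≥0∞) ≤ ((YN 1 ω : ℕ) : ℝ≥0∞)} = {ω | a * N ≤ YN 1 ω} := by
    ext ω; exact Nat.cast_le (α := ℝ≥0∞)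
  have hMarkov : ((a * N : ℕ) : ℝ≥0∞) * PN {ω | a * N ≤ YN 1 ω}
      ≤ ∫⁻ ω, ((YN 1 ω : ℕ) : ℝ≥0∞) ∂PN := by
    rw [← hsetEq]
    exact mul_meas_ge_le_lintegral₀ hmeasYN.aemeasurable _
  have hNne : (N : ℝ≥0∞) ≠ 0 := by
    simp only [ne_eq, Nat.cast_eq_zero]; omega
  have hNtop : (N : ℝ≥0∞) ≠ ⊤ := ENNReal.natCast_ne_top N
  have hm_gt : 1 < m := by
    have h1' : (N : ℝ≥0∞) * 1 < (N : ℝ≥0∞) * ((a : ℝ≥0∞) * PN {ω | a * N ≤ YN 1 ω}) := by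
      rw [ENNReal.mul_lt_mul_iff_right hNne hNtop]
      exact hyp
    have h2' : (N : ℝ≥0∞) * ((a : ℝ≥0∞) * PN {ω | a * N ≤ YN 1 ω}) ≤ (N : ℝ≥0∞) * m := by
      calc (N : ℝ≥0∞) * ((a : ℝ≥0∞) * PN {ω | a * N ≤ YN 1 ω})
          = ((a * N : ℕ) : ℝ≥0∞) * PN {ω | a * N ≤ YN 1 ω} := by
            push_cast; ring
        _ ≤ ∫⁻ ω, ((YN 1 ω : ℕ) : ℝ≥0∞) ∂PN := hMarkov
        _ = (N : ℝ≥0∞) * m := hEy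
    have := lt_of_lt_of_le h1' h2'
    rwa [ENNReal.mul_lt_mul_iff_right hNne hNtop] at this
  -- Step 2: pick a truncation level B
  have hsup : m = ⨆ B : ℕ, ∫⁻ x, ((min x B : ℕ) : ℝ≥0∞) ∂ν := by
    rw [hmdef, ← lintegral_iSup (fun B => measurable_of_countable _)]
    · congr 1; funext x
      refine le_antisymm (le_iSup_of_le x (by simp)) (iSup_le fun B => ?_)
      exact Nat.cast_le.2 (min_le_left _ _)
    · intro B B' hBB' x
      exact Nat.cast_le.2 (min_le_min le_rfl hBB')
  have hexB : ∃ B : ℕ, 1 < ∫⁻ x, ((min x B : ℕ) : ℝ≥0∞) ∂ν := by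
    rw [hsup] at hm_gt
    exact lt_iSup_iff.1 hm_gt
  obtain ⟨B, hm1_one⟩ := hexB
  set m1 := ∫⁻ x, ((min x B : ℕ) : ℝ≥0∞) ∂ν with hm1def
  set m2 := ∫⁻ x, ((min x B : ℕ) : ℝ≥0∞) ^ 2 ∂ν with hm2def
  have hm1_le : m1 ≤ (B : ℝ≥0∞) := by
    calc m1 ≤ ∫⁻ _x, (B : ℝ≥0∞) ∂ν :=
          lintegral_mono fun x => Nat.cast_le.2 (min_le_right _ _)
      _ = (B : ℝ≥0∞) := by rw [lintegral_const, measure_univ, mul_one]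
  have hm2_le : m2 ≤ ((B : ℝ≥0∞)) ^ 2 := by
    calc m2 ≤ ∫⁻ _x, ((B : ℝ≥0∞)) ^ 2 ∂ν := by
          refine lintegral_mono fun x => ?_
          exact pow_le_pow_left' (Nat.cast_le.2 (min_le_right _ _)) 2
      _ = ((B : ℝ≥0∞)) ^ 2 := by rw [lintegral_const, measure_univ, mul_one]
  have hm1_top : m1 ≠ ⊤ := ne_top_of_le_ne_top (ENNReal.natCast_ne_top B) hm1_le
  have hm2_top : m2 ≠ ⊤ := ne_top_of_le_ne_top
    (by simp [ENNReal.pow_ne_top, ENNReal.natCast_ne_top]) hm2_le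
  -- Step 3: lower bound for the survival of the truncated process
  set K := 1 + m2 * (1 - m1⁻¹)⁻¹ with hKdef
  have hlb : ∀ n, (4 * K)⁻¹ ≤ P1 {ω | truncGW X1 B n ω ≠ 0} := fun n =>
    survival_lb hX1 hind1 hmap1 hm1_one hm1_top hm2_top n
  have hr1 : m1⁻¹ < 1 := ENNReal.inv_lt_one.2 hm1_one
  have hrne : (1:ℝ≥0∞) - m1⁻¹ ≠ 0 := (tsub_pos_iff_lt.2 hr1).ne'
  have hK_top : K ≠ ⊤ :=
    ENNReal.add_ne_top.2 ⟨ENNReal.one_ne_top,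
      ENNReal.mul_ne_top hm2_top (ENNReal.inv_ne_top.2 hrne)⟩
  have h4K_top : (4 : ℝ≥0∞) * K ≠ ⊤ := ENNReal.mul_ne_top (by norm_num) hK_top
  have hpos : 0 < (4 * K)⁻¹ := ENNReal.inv_pos.2 h4K_top
  -- Step 4: limit along n
  set D : ℕ → Set Ω1 := fun n => {ω | truncGW X1 B n ω ≠ 0} with hDdef
  have hmeasD : ∀ n, MeasurableSet (D n) := by
    intro n
    have ht_amb : Measurable (truncGW X1 B n) :=
      (truncGW_measurable_past (X := X1) B n).mono (pastMS_le hX1 n) le_rfl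
    exact ht_amb (MeasurableSet.compl (measurableSet_singleton 0))
  have hanti : Antitone D := by
    refine antitone_nat_of_succ_le fun n ω hω => ?_
    intro h0
    exact hω (truncGW_antitone n ω h0)
  have htend : Tendsto (P1 ∘ D) atTop (nhds (P1 (⋂ n, D n))) :=
    tendsto_measure_iInter_atTop (fun n => (hmeasD n).nullMeasurableSet) hanti
      ⟨0, measure_ne_top P1 _⟩
  have hcap : (4 * K)⁻¹ ≤ P1 (⋂ n, D n) :=
    ge_of_tendsto htend (Filter.Eventually.of_forall fun n => hlb n)
  have hsubset : (⋂ n, D n) ⊆ {ω | ∀ k, Y1 k ω ≠ 0} := by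
    intro ω hω k
    have hle : truncGW X1 B k ω ≤ Y1 k ω := truncGW_le hY1 h10 k ω
    have hne : truncGW X1 B k ω ≠ 0 := Set.mem_iInter.1 hω k
    intro heq
    exact hne (Nat.le_zero.1 (heq ▸ hle))
  calc (0 : ℝ≥0∞) < (4 * K)⁻¹ := hpos
    _ ≤ P1 (⋂ n, D n) := hcap
    _ ≤ P1 {ω | ∀ k, Y1 k ω ≠ 0} := measure_mono hsubset
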